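/- Let X be a Banach space and E ⊆ F ⊆ X finite-dimensional subspaces. Define λ(X,F,E) = inf{‖T‖ : T ∈ L(X,F), T|_E = Id_E}. Then λ(X,F,E) = ( inf{ ‖S‖_{ΛX} : S ∈ L(F,E), tr(S|_E) = 1 } )^{−1}, where ‖S‖_{ΛX} is the nuclear norm of the composition of S with the inclusion E ↪ X. -/

import Mathlib

/-- The nuclear norm of a (finite-rank) operator, defined as the infimum of
`∑ ‖fᵢ‖ * ‖xᵢ‖` over finite representations `A = ∑ fᵢ ⊗ xᵢ`. -/
noncomputable def nuclearNorm {F X : Type*} [NormedAddCommGroup F] [NormedSpace ℝ F]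
    [NormedAddCommGroup X] [NormedSpace ℝ X] (A : F →L[ℝ] X) : ℝ :=
  sInf {c | ∃ (k : ℕ) (f : Fin k → (F →L[ℝ] ℝ)) (x : Fin k → X),
    (∀ v, A v = ∑ i, f i v • x i) ∧ c = ∑ i, ‖f i‖ * ‖x i‖}

namespace NuclearAux

variable {F X : Type*} [NormedAddCommGroup F] [NormedSpace ℝ F]
  [NormedAddCommGroup X] [NormedSpace ℝ X]

def nnSet (A : F →L[ℝ] X) : Set ℝ :=
  {c | ∃ (k : ℕ) (f : Fin k → (F →L[ℝ] ℝ)) (x : Fin k → X),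
    (∀ v, A v = ∑ i, f i v • x i) ∧ c = ∑ i, ‖f i‖ * ‖x i‖}

lemma nuclearNorm_eq (A : F →L[ℝ] X) : nuclearNorm A = sInf (nnSet A) := rfl

lemma nnSet_nonneg {A : F →L[ℝ] X} {c : ℝ} (hc : c ∈ nnSet A) : 0 ≤ c := by
  obtain ⟨k, f, x, -, rfl⟩ := hc
  positivity

lemma bddBelow_nnSet (A : F →L[ℝ] X) : BddBelow (nnSet A) :=
  ⟨0, fun _ hc => nnSet_nonneg hc⟩

lemma nuclearNorm_nonneg (A : F →L[ℝ] X) : 0 ≤ nuclearNorm A :=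
  Real.sInf_nonneg (fun _ hc => nnSet_nonneg hc)

lemma nuclearNorm_le {A : F →L[ℝ] X} {c : ℝ} (hc : c ∈ nnSet A) : nuclearNorm A ≤ c :=
  csInf_le (bddBelow_nnSet A) hc

variable [FiniteDimensional ℝ F]

lemma nnSet_nonempty (A : F →L[ℝ] X) : (nnSet A).Nonempty := by
  classical
  let b := Module.finBasis ℝ F
  refine ⟨_, _, fun i => LinearMap.toContinuousLinearMap (b.coord i), fun i => A (b i),
    fun v => ?_, rfl⟩
  conv_lhs => rw [← b.sum_repr v]
  rw [map_sum]
  simp [Module.Basis.coord_apply]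

lemma opNorm_le_nuclearNorm (A : F →L[ℝ] X) : ‖A‖ ≤ nuclearNorm A := by
  refine le_csInf (nnSet_nonempty A) ?_
  rintro c ⟨k, f, x, hA, rfl⟩
  refine A.opNorm_le_bound (by positivity) (fun v => ?_)
  rw [hA v]
  calc ‖∑ i, f i v • x i‖ ≤ ∑ i, ‖f i v • x i‖ := norm_sum_le _ _
    _ ≤ ∑ i, (‖f i‖ * ‖x i‖) * ‖v‖ := by
        refine Finset.sum_le_sum (fun i _ => ?_)
        rw [norm_smul]
        calc ‖f i v‖ * ‖x i‖ ≤ (‖f i‖ * ‖v‖) * ‖x i‖ :=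
              mul_le_mul_of_nonneg_right ((f i).le_opNorm v) (norm_nonneg _)
          _ = (‖f i‖ * ‖x i‖) * ‖v‖ := by ring
    _ = (∑ i, ‖f i‖ * ‖x i‖) * ‖v‖ := by rw [Finset.sum_mul]

lemma exists_rep_lt (A : F →L[ℝ] X) {ε : ℝ} (hε : 0 < ε) :
    ∃ c ∈ nnSet A, c < nuclearNorm A + ε :=
  Real.lt_sInf_add_pos (nnSet_nonempty A) hε

lemma nuclearNorm_add_le (A B : F →L[ℝ] X) :
    nuclearNorm (A + B) ≤ nuclearNorm A + nuclearNorm B := by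
  refine le_of_forall_pos_le_add (fun ε hε => ?_)
  obtain ⟨ca, ⟨ka, fa, xa, hA, rfl⟩, ha⟩ := exists_rep_lt A (half_pos hε)
  obtain ⟨cb, ⟨kb, fb, xb, hB, rfl⟩, hb⟩ := exists_rep_lt B (half_pos hε)
  have : nuclearNorm (A + B) ≤ (∑ i, ‖fa i‖ * ‖xa i‖) + ∑ i, ‖fb i‖ * ‖xb i‖ := by
    refine nuclearNorm_le ⟨ka + kb, Fin.append fa fb, Fin.append xa xb, fun v => ?_, ?_⟩
    · simp [Fin.sum_univ_add, Fin.append_left, Fin.append_right, hA v, hB v]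
    · simp [Fin.sum_univ_add, Fin.append_left, Fin.append_right]
  linarith

lemma nuclearNorm_smul_le (c : ℝ) (A : F →L[ℝ] X) :
    nuclearNorm (c • A) ≤ |c| * nuclearNorm A := by
  rcases eq_or_ne c 0 with rfl | hc
  · simp only [zero_smul, abs_zero, zero_mul]
    refine nuclearNorm_le ⟨0, Fin.elim0, Fin.elim0, by simp, by simp⟩
  have hc' : 0 < |c| := abs_pos.mpr hc
  refine le_of_forall_pos_le_add (fun ε hε => ?_)
  obtain ⟨ca, ⟨k, f, x, hA, rfl⟩, ha⟩ := exists_rep_lt A (div_pos hε hc')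
  have : nuclearNorm (c • A) ≤ ∑ i, ‖f i‖ * ‖c • x i‖ := by
    refine nuclearNorm_le ⟨k, f, fun i => c • x i, fun v => ?_, rfl⟩
    rw [ContinuousLinearMap.smul_apply, hA v, Finset.smul_sum]
    exact Finset.sum_congr rfl (fun i _ => smul_comm c _ _)
  have h2 : ∑ i, ‖f i‖ * ‖c • x i‖ = |c| * ∑ i, ‖f i‖ * ‖x i‖ := by
    rw [Finset.mul_sum]
    refine Finset.sum_congr rfl (fun i _ => ?_)
    rw [norm_smul, Real.norm_eq_abs]; ring
  have h3 : |c| * (∑ i, ‖f i‖ * ‖x i‖) ≤ |c| * (nuclearNorm A + ε / |c|) :=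
    mul_le_mul_of_nonneg_left ha.le hc'.le
  have h4 : |c| * (nuclearNorm A + ε / |c|) = |c| * nuclearNorm A + ε := by
    field_simp
  linarith [this, h2 ▸ this]

lemma nuclearNorm_smul_pos (c : ℝ) (hc : 0 < c) (A : F →L[ℝ] X) :
    nuclearNorm (c • A) = c * nuclearNorm A := by
  refine le_antisymm ?_ ?_
  · simpa [abs_of_pos hc] using nuclearNorm_smul_le c A
  · have := nuclearNorm_smul_le c⁻¹ (c • A)
    rw [smul_smul, inv_mul_cancel₀ hc.ne', one_smul, abs_of_pos (inv_pos.mpr hc)] at this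
    calc c * nuclearNorm A ≤ c * (c⁻¹ * nuclearNorm (c • A)) :=
          mul_le_mul_of_nonneg_left this hc.le
      _ = nuclearNorm (c • A) := by field_simp

lemma nuclearNorm_neg (A : F →L[ℝ] X) : nuclearNorm (-A) = nuclearNorm A := by
  have h1 := nuclearNorm_smul_le (-1 : ℝ) A
  have h2 := nuclearNorm_smul_le (-1 : ℝ) (-A)
  simp only [neg_smul, one_smul, neg_neg, abs_neg, abs_one, one_mul] at h1 h2
  exact le_antisymm h1 h2

omit [FiniteDimensional ℝ F] in
lemma nuclearNorm_smulRight_le (f : F →L[ℝ] ℝ) (x : X) :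
    nuclearNorm (f.smulRight x) ≤ ‖f‖ * ‖x‖ := by
  refine nuclearNorm_le ⟨1, fun _ => f, fun _ => x, fun v => by simp, by simp⟩

end NuclearAux

section Main

variable {X : Type*} [NormedAddCommGroup X] [NormedSpace ℝ X]
  (E F : Submodule ℝ X)

/-- The map `S ↦ E.subtypeL ∘ S` as a linear map. -/
def Jmap : (F →L[ℝ] E) →ₗ[ℝ] (F →L[ℝ] X) where
  toFun S := E.subtypeL.comp S
  map_add' S S' := by ext v; simp
  map_smul' c S := by ext v; simp

@[simp] lemma Jmap_apply (S : F →L[ℝ] E) (v : F) : Jmap E F S v = (S v : X) := rfl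

lemma Jmap_injective : Function.Injective (Jmap E F) := by
  intro S S' h
  ext v
  simpa using DFunLike.congr_fun h v

variable (hEF : E ≤ F)

/-- The trace functional `S ↦ tr (S|_E)` as a linear map. -/
noncomputable def τmap : (F →L[ℝ] E) →ₗ[ℝ] ℝ where
  toFun S := LinearMap.trace ℝ E ((S : F →ₗ[ℝ] E).comp (Submodule.inclusion hEF))
  map_add' S S' := by
    have h : (((S + S' : F →L[ℝ] E)) : F →ₗ[ℝ] E).comp (Submodule.inclusion hEF)
        = (S : F →ₗ[ℝ] E).comp (Submodule.inclusion hEF)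
          + (S' : F →ₗ[ℝ] E).comp (Submodule.inclusion hEF) := by
      ext v; simp
    rw [h, map_add]
  map_smul' c S := by
    have h : (((c • S : F →L[ℝ] E)) : F →ₗ[ℝ] E).comp (Submodule.inclusion hEF)
        = c • ((S : F →ₗ[ℝ] E).comp (Submodule.inclusion hEF)) := by
      ext v; simp
    rw [h, map_smul, RingHom.id_apply]

variable [FiniteDimensional ℝ E] [FiniteDimensional ℝ F]

/-- The fundamental inequality: if `T` extends the identity of `E` then
`tr (S|_E) ≤ ‖T‖ * c` for any representation sum `c` of `Jmap S`. -/
lemma trace_le_opNorm_mul (T : X →L[ℝ] F) (hT : ∀ x : X, x ∈ E → (T x : X) = x)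
    (S : F →L[ℝ] E) {c : ℝ} (hc : c ∈ NuclearAux.nnSet (Jmap E F S)) :
    τmap E F hEF S ≤ ‖T‖ * c := by
  classical
  obtain ⟨k, f, x, hrep, rfl⟩ := hc
  have huv : ∀ w : F, (Submodule.inclusion hEF) (S w) = ∑ i, f i w • T (x i) := by
    intro w
    have h1 : Submodule.inclusion hEF (S w) = T ((Jmap E F S) w) := by
      refine Subtype.ext ?_
      have := hT ((S w : X)) (S w).2
      simpa using this.symm
    rw [h1, hrep w, map_sum]
    simp
  have hcomp : (Submodule.inclusion hEF) ∘ₗ (S : F →ₗ[ℝ] E)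
      = ∑ i, dualTensorHom ℝ F F (((f i : F →ₗ[ℝ] ℝ)) ⊗ₜ[ℝ] T (x i)) := by
    ext w
    rw [LinearMap.sum_apply]
    have := congrArg Subtype.val (huv w)
    simpa [dualTensorHom_apply] using this
  have htr : τmap E F hEF S = ∑ i, f i (T (x i)) := by
    calc τmap E F hEF S
        = LinearMap.trace ℝ F ((Submodule.inclusion hEF) ∘ₗ (S : F →ₗ[ℝ] E)) :=
          (LinearMap.trace_comp_comm' (S : F →ₗ[ℝ] E) (Submodule.inclusion hEF)).symm
      _ = ∑ i, f i (T (x i)) := by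
          rw [hcomp, map_sum]
          refine Finset.sum_congr rfl (fun i _ => ?_)
          rw [LinearMap.trace_eq_contract_apply, contractLeft_apply]
          rfl
  rw [htr, Finset.mul_sum]
  refine Finset.sum_le_sum (fun i _ => ?_)
  calc f i (T (x i)) ≤ ‖f i (T (x i))‖ := le_abs_self _
    _ ≤ ‖f i‖ * ‖T (x i)‖ := (f i).le_opNorm _
    _ ≤ ‖f i‖ * (‖T‖ * ‖x i‖) :=
        mul_le_mul_of_nonneg_left (T.le_opNorm _) (norm_nonneg _)
    _ = ‖T‖ * (‖f i‖ * ‖x i‖) := by ring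

end Main

section HB

variable {X : Type*} [NormedAddCommGroup X] [NormedSpace ℝ X]
  (E F : Submodule ℝ X) (hEF : E ≤ F)
  [FiniteDimensional ℝ E] [FiniteDimensional ℝ F]

@[simp] lemma τmap_apply (S : F →L[ℝ] E) :
    τmap E F hEF S
      = LinearMap.trace ℝ E ((S : F →ₗ[ℝ] E).comp (Submodule.inclusion hEF)) := rfl

set_option maxHeartbeats 1000000 in
set_option synthInstance.maxHeartbeats 100000 in
open NuclearAux in
lemma exists_extension_opNorm_le {m : ℝ} (hm : 0 < m)
    (hlow : ∀ S : F →L[ℝ] E, τmap E F hEF S = 1 → m ≤ nuclearNorm (Jmap E F S)) :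
    ∃ T : X →L[ℝ] F, (∀ x : X, x ∈ E → (T x : X) = x) ∧ ‖T‖ ≤ m⁻¹ := by
  classical
  have hJinj := Jmap_injective E F
  let eJ : (F →L[ℝ] E) ≃ₗ[ℝ] LinearMap.range (Jmap E F) :=
    LinearEquiv.ofInjective _ hJinj
  let g : ↥(LinearMap.range (Jmap E F)) →ₗ[ℝ] ℝ :=
    (τmap E F hEF) ∘ₗ (eJ.symm : ↥(LinearMap.range (Jmap E F)) →ₗ[ℝ] (F →L[ℝ] E))
  let pm : (F →L[ℝ] X) →ₗ.[ℝ] ℝ := ⟨LinearMap.range (Jmap E F), g⟩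
  have key : ∀ S : F →L[ℝ] E,
      τmap E F hEF S ≤ m⁻¹ * nuclearNorm (Jmap E F S) := by
    intro S
    rcases le_or_gt (τmap E F hEF S) 0 with h | h
    · refine h.trans ?_
      have := nuclearNorm_nonneg (Jmap E F S)
      positivity
    · have h1 : τmap E F hEF ((τmap E F hEF S)⁻¹ • S) = 1 := by
        rw [map_smul, smul_eq_mul, inv_mul_cancel₀ h.ne']
      have h2 := hlow _ h1
      rw [map_smul, nuclearNorm_smul_pos _ (inv_pos.mpr h)] at h2
      have h3 : m * τmap E F hEF S ≤ nuclearNorm (Jmap E F S) := by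
        have h4 := mul_le_mul_of_nonneg_left h2 h.le
        calc m * τmap E F hEF S = τmap E F hEF S * m := mul_comm _ _
          _ ≤ τmap E F hEF S * ((τmap E F hEF S)⁻¹ * nuclearNorm (Jmap E F S)) := h4
          _ = nuclearNorm (Jmap E F S) := by
              rw [← mul_assoc, mul_inv_cancel₀ h.ne', one_mul]
      calc τmap E F hEF S = m⁻¹ * (m * τmap E F hEF S) := by
            rw [← mul_assoc, inv_mul_cancel₀ hm.ne', one_mul]
        _ ≤ m⁻¹ * nuclearNorm (Jmap E F S) :=
            mul_le_mul_of_nonneg_left h3 (inv_pos.mpr hm).le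
  have hdombound : ∀ y : pm.domain, pm y ≤ m⁻¹ * nuclearNorm (y : F →L[ℝ] X) := by
    intro y
    obtain ⟨S, hS⟩ := y.2
    have hy : (y : F →L[ℝ] X) = Jmap E F S := hS.symm
    have hsymm : eJ.symm y = S := by
      rw [LinearEquiv.symm_apply_eq]
      exact Subtype.ext (by rw [LinearEquiv.ofInjective_apply]; exact hy)
    have hpmy : pm y = τmap E F hEF S := by
      show g y = _
      show τmap E F hEF (eJ.symm y) = _
      rw [hsymm]
    rw [hpmy, hy]
    exact key S
  obtain ⟨gext, hgt_ext, hgt_le⟩ := exists_extension_of_le_sublinear pm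
      (fun y => m⁻¹ * nuclearNorm y)
      (fun c hc y => by
        rw [nuclearNorm_smul_pos c hc]; ring)
      (fun y z => by
        have h := nuclearNorm_add_le y z
        have := mul_le_mul_of_nonneg_left h (inv_pos.mpr hm).le
        linarith [this])
      hdombound
  have habs : ∀ y, |gext y| ≤ m⁻¹ * nuclearNorm y := by
    intro y
    refine abs_le.2 ⟨?_, hgt_le y⟩
    have h1 := hgt_le (-y)
    rw [map_neg, nuclearNorm_neg] at h1
    linarith
  set n := Module.finrank ℝ F with hn
  let b : Module.Basis (Fin n) ℝ F := Module.finBasis ℝ F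
  let cf : Fin n → (F →L[ℝ] ℝ) := fun j => LinearMap.toContinuousLinearMap (b.coord j)
  let Tlin : X →ₗ[ℝ] F :=
  { toFun := fun x => ∑ j, gext ((cf j).smulRight x) • b j
    map_add' := by
      intro x y
      have hsr : ∀ j : Fin n, (cf j).smulRight (x + y)
          = (cf j).smulRight x + (cf j).smulRight y := fun j => by
        ext v
        simp only [ContinuousLinearMap.smulRight_apply, ContinuousLinearMap.add_apply, smul_add]
      simp only [hsr, map_add, add_smul]
      rw [Finset.sum_add_distrib]
    map_smul' := by
      intro c x
      have hsr : ∀ j : Fin n, (cf j).smulRight (c • x)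
          = c • ((cf j).smulRight x) := fun j => by
        ext v
        simp only [ContinuousLinearMap.smulRight_apply, ContinuousLinearMap.smul_apply,
          smul_comm c]
      simp only [hsr, map_smul, smul_eq_mul, RingHom.id_apply]
      rw [Finset.smul_sum]
      exact Finset.sum_congr rfl (fun j _ => by rw [smul_smul]) }
  have hTlin_apply : ∀ x, Tlin x = ∑ j, gext ((cf j).smulRight x) • b j := fun _ => rfl
  have hcf : ∀ (j : Fin n) (v : F), cf j v = b.repr v j := by
    intro j v
    simp [cf, Module.Basis.coord_apply]
  have hpair : ∀ (f : F →L[ℝ] ℝ) (x : X), f (Tlin x) = gext (f.smulRight x) := by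
    intro f x
    have hfd : ∑ j, f (b j) • ((cf j).smulRight x) = f.smulRight x := by
      ext v
      simp only [ContinuousLinearMap.sum_apply, ContinuousLinearMap.smul_apply,
        ContinuousLinearMap.smulRight_apply]
      have hterm : ∀ j : Fin n, f (b j) • (cf j v • x) = (b.repr v j * f (b j)) • x := by
        intro j
        rw [smul_smul, hcf j v, mul_comm]
      rw [Finset.sum_congr rfl (fun j _ => hterm j), ← Finset.sum_smul]
      congr 1
      conv_rhs => rw [← b.sum_repr v]
      rw [map_sum]
      exact (Finset.sum_congr rfl (fun j _ => by rw [map_smul, smul_eq_mul])).symm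
    calc f (Tlin x) = ∑ j, gext ((cf j).smulRight x) * f (b j) := by
          rw [hTlin_apply, map_sum]
          exact Finset.sum_congr rfl (fun j _ => by rw [map_smul, smul_eq_mul])
      _ = gext (∑ j, f (b j) • ((cf j).smulRight x)) := by
          rw [map_sum]
          exact Finset.sum_congr rfl (fun j _ => by rw [map_smul, smul_eq_mul, mul_comm])
      _ = gext (f.smulRight x) := by rw [hfd]
  have hTb : ∀ x, ‖Tlin x‖ ≤ m⁻¹ * ‖x‖ := by
    intro x
    refine NormedSpace.norm_le_dual_bound ℝ (Tlin x) (by positivity) (fun f => ?_)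
    rw [hpair f x]
    calc ‖gext (f.smulRight x)‖ = |gext (f.smulRight x)| := Real.norm_eq_abs _
      _ ≤ m⁻¹ * nuclearNorm (f.smulRight x) := habs _
      _ ≤ m⁻¹ * (‖f‖ * ‖x‖) :=
          mul_le_mul_of_nonneg_left (nuclearNorm_smulRight_le f x) (inv_pos.mpr hm).le
      _ = (m⁻¹ * ‖x‖) * ‖f‖ := by ring
  refine ⟨Tlin.mkContinuous m⁻¹ hTb, ?_, Tlin.mkContinuous_norm_le (inv_pos.mpr hm).le hTb⟩
  intro x hx
  have hTval : ∀ f : F →L[ℝ] ℝ, f ((Tlin.mkContinuous m⁻¹ hTb) x) = f (⟨x, hEF hx⟩ : F) := by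
    intro f
    have h1 : (Tlin.mkContinuous m⁻¹ hTb) x = Tlin x := rfl
    rw [h1, hpair]
    set S : F →L[ℝ] E := f.smulRight (⟨x, hx⟩ : E) with hSdef
    have hJS : Jmap E F S = f.smulRight x := by
      ext v
      simp [hSdef]
    have hmem : f.smulRight x ∈ LinearMap.range (Jmap E F) := ⟨S, hJS⟩
    have h2 := hgt_ext ⟨f.smulRight x, hmem⟩
    have hsymm : eJ.symm ⟨f.smulRight x, hmem⟩ = S := by
      rw [LinearEquiv.symm_apply_eq]
      exact Subtype.ext (by rw [LinearEquiv.ofInjective_apply]; exact hJS.symm)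
    have h3 : pm ⟨f.smulRight x, hmem⟩ = τmap E F hEF S := by
      show τmap E F hEF (eJ.symm ⟨f.smulRight x, hmem⟩) = _
      rw [hsymm]
    have h4 : τmap E F hEF S = f (⟨x, hEF hx⟩ : F) := by
      rw [τmap_apply]
      have hcompS : ((S : F →ₗ[ℝ] E).comp (Submodule.inclusion hEF))
          = dualTensorHom ℝ E E
            (((f : F →ₗ[ℝ] ℝ).comp (Submodule.inclusion hEF)) ⊗ₜ[ℝ] (⟨x, hx⟩ : E)) := by
        ext e
        simp [hSdef, dualTensorHom_apply]
      rw [hcompS, LinearMap.trace_eq_contract_apply, contractLeft_apply]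
      rfl
    calc gext (f.smulRight x) = pm ⟨f.smulRight x, hmem⟩ := h2
      _ = f (⟨x, hEF hx⟩ : F) := by rw [h3, h4]
  have hfin : (Tlin.mkContinuous m⁻¹ hTb) x = (⟨x, hEF hx⟩ : F) := by
    have hnorm : ‖(Tlin.mkContinuous m⁻¹ hTb) x - (⟨x, hEF hx⟩ : F)‖ ≤ 0 := by
      refine NormedSpace.norm_le_dual_bound ℝ _ le_rfl (fun f => ?_)
      rw [map_sub, hTval f, sub_self]
      simp
    exact sub_eq_zero.mp (norm_le_zero_iff.mp hnorm)
  rw [hfin]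

end HB


set_option maxHeartbeats 1000000 in
set_option synthInstance.maxHeartbeats 400000 in
theorem stmt_10 (X : Type*) [NormedAddCommGroup X] [NormedSpace ℝ X] [CompleteSpace X]
    (E F : Submodule ℝ X) [FiniteDimensional ℝ E] [FiniteDimensional ℝ F]
    (hEF : E ≤ F) :
    sInf {c | ∃ T : X →L[ℝ] F, (∀ x : X, x ∈ E → (T x : X) = x) ∧ c = ‖T‖}
      = (sInf {c | ∃ S : F →L[ℝ] E,
          LinearMap.trace ℝ E ((S : F →ₗ[ℝ] E).comp (Submodule.inclusion hEF)) = 1 ∧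
          c = nuclearNorm (E.subtypeL.comp S)})⁻¹ := by
  classical
  by_cases hE : E = ⊥
  · subst hE
    have hB : {c | ∃ S : F →L[ℝ] (⊥ : Submodule ℝ X),
        LinearMap.trace ℝ (⊥ : Submodule ℝ X)
          ((S : F →ₗ[ℝ] (⊥ : Submodule ℝ X)).comp (Submodule.inclusion hEF)) = 1 ∧
        c = nuclearNorm ((⊥ : Submodule ℝ X).subtypeL.comp S)} = (∅ : Set ℝ) := by
      ext c
      simp only [Set.mem_setOf_eq, Set.mem_empty_iff_false, iff_false]
      rintro ⟨S, hS, -⟩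
      have hz : ((S : F →ₗ[ℝ] (⊥ : Submodule ℝ X)).comp (Submodule.inclusion hEF)) = 0 := by
        have : Subsingleton (⊥ : Submodule ℝ X) := by
          constructor
          rintro ⟨a, ha⟩ ⟨b, hb⟩
          simp only [Submodule.mem_bot] at ha hb
          simp [ha, hb]
        exact Subsingleton.elim _ _
      rw [hz, map_zero] at hS
      exact one_ne_zero hS.symm
    have hA0 : (0:ℝ) ∈ {c | ∃ T : X →L[ℝ] F,
        (∀ x : X, x ∈ (⊥ : Submodule ℝ X) → (T x : X) = x) ∧ c = ‖T‖} := by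
      refine ⟨0, fun x hx => ?_, (norm_zero (E := X →L[ℝ] F)).symm⟩
      have hx0 : x = 0 := by simpa using hx
      simp [hx0]
    rw [hB, Real.sInf_empty, inv_zero]
    refine le_antisymm
      (csInf_le ⟨0, ?_⟩ hA0) (le_csInf ⟨0, hA0⟩ ?_) <;>
      · rintro c ⟨T, -, rfl⟩
        exact norm_nonneg T
  · obtain ⟨e0, he0E, he0⟩ := (Submodule.ne_bot_iff E).mp hE
    obtain ⟨π, hπ⟩ := Submodule.ClosedComplemented.of_finiteDimensional E
    let ι : E →L[ℝ] F := LinearMap.toContinuousLinearMap (Submodule.inclusion hEF)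
    let T₀ : X →L[ℝ] F := ι.comp π
    have hT₀ : ∀ x : X, x ∈ E → (T₀ x : X) = x := by
      intro x hx
      show ((ι (π x)) : X) = x
      have h1 : π x = ⟨x, hx⟩ := by simpa using hπ ⟨x, hx⟩
      rw [h1]
      rfl
    have hTnorm : ∀ T : X →L[ℝ] F, (∀ x : X, x ∈ E → (T x : X) = x) → 1 ≤ ‖T‖ := by
      intro T hT
      have h2 : ‖T e0‖ = ‖e0‖ := by
        have : ‖T e0‖ = ‖(T e0 : X)‖ := rfl
        rw [this, hT e0 he0E]
      have h3 := T.le_opNorm e0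
      rw [h2] at h3
      have he0pos : 0 < ‖e0‖ := norm_pos_iff.mpr he0
      nlinarith
    have hkey : ∀ (T : X →L[ℝ] F), (∀ x : X, x ∈ E → (T x : X) = x) →
        ∀ S : F →L[ℝ] E, τmap E F hEF S = 1 → ‖T‖⁻¹ ≤ nuclearNorm (Jmap E F S) := by
      intro T hT S hS
      have hTpos : (0:ℝ) < ‖T‖ := lt_of_lt_of_le one_pos (hTnorm T hT)
      refine le_csInf (NuclearAux.nnSet_nonempty _) (fun c hc => ?_)
      have h1 := trace_le_opNorm_mul E F hEF T hT S hc
      rw [hS] at h1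
      calc ‖T‖⁻¹ = ‖T‖⁻¹ * 1 := (mul_one _).symm
        _ ≤ ‖T‖⁻¹ * (‖T‖ * c) := mul_le_mul_of_nonneg_left h1 (inv_pos.mpr hTpos).le
        _ = c := by rw [← mul_assoc, inv_mul_cancel₀ hTpos.ne', one_mul]
    have hnE : 0 < ((Module.finrank ℝ E : ℕ) : ℝ) := by
      have : Nontrivial E := Submodule.nontrivial_iff_ne_bot.mpr hE
      exact_mod_cast Module.finrank_pos
    let S₀ : F →L[ℝ] E := ((Module.finrank ℝ E : ℝ))⁻¹ • (π.comp F.subtypeL)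
    have hS₀ : τmap E F hEF S₀ = 1 := by
      have hid : (((π.comp F.subtypeL) : F →ₗ[ℝ] E)).comp (Submodule.inclusion hEF)
          = LinearMap.id := by
        ext e
        exact congrArg Subtype.val (hπ e)
      show τmap E F hEF (((Module.finrank ℝ E : ℝ))⁻¹ • (π.comp F.subtypeL)) = 1
      rw [map_smul, smul_eq_mul, τmap_apply, hid, LinearMap.trace_id,
        inv_mul_cancel₀ hnE.ne']
    have hBne : {c | ∃ S : F →L[ℝ] E,
        LinearMap.trace ℝ E ((S : F →ₗ[ℝ] E).comp (Submodule.inclusion hEF)) = 1 ∧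
        c = nuclearNorm (E.subtypeL.comp S)}.Nonempty :=
      ⟨nuclearNorm (E.subtypeL.comp S₀), S₀, hS₀, rfl⟩
    have hT₀pos : (0:ℝ) < ‖T₀‖ := lt_of_lt_of_le one_pos (hTnorm T₀ hT₀)
    have hmlow : ∀ b ∈ {c | ∃ S : F →L[ℝ] E,
        LinearMap.trace ℝ E ((S : F →ₗ[ℝ] E).comp (Submodule.inclusion hEF)) = 1 ∧
        c = nuclearNorm (E.subtypeL.comp S)}, ‖T₀‖⁻¹ ≤ b := by
      rintro b ⟨S, hS, rfl⟩
      exact hkey T₀ hT₀ S hS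
    set m := sInf {c | ∃ S : F →L[ℝ] E,
        LinearMap.trace ℝ E ((S : F →ₗ[ℝ] E).comp (Submodule.inclusion hEF)) = 1 ∧
        c = nuclearNorm (E.subtypeL.comp S)} with hmdef
    have hmpos : 0 < m := lt_of_lt_of_le (inv_pos.mpr hT₀pos) (le_csInf hBne hmlow)
    have hBbdd : BddBelow {c | ∃ S : F →L[ℝ] E,
        LinearMap.trace ℝ E ((S : F →ₗ[ℝ] E).comp (Submodule.inclusion hEF)) = 1 ∧
        c = nuclearNorm (E.subtypeL.comp S)} := ⟨‖T₀‖⁻¹, hmlow⟩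
    refine le_antisymm ?_ ?_
    · have hlow : ∀ S : F →L[ℝ] E, τmap E F hEF S = 1 → m ≤ nuclearNorm (Jmap E F S) := by
        intro S hS
        exact csInf_le hBbdd ⟨S, hS, rfl⟩
      obtain ⟨T, hText, hTle⟩ := exists_extension_opNorm_le E F hEF hmpos hlow
      refine le_trans (csInf_le ⟨0, ?_⟩ ⟨T, hText, rfl⟩) hTle
      rintro c ⟨T', -, rfl⟩
      exact norm_nonneg T'
    · refine le_csInf ⟨‖T₀‖, T₀, hT₀, rfl⟩ ?_
      rintro a ⟨T, hT, rfl⟩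
      have h1 : ‖T‖⁻¹ ≤ m := by
        refine le_csInf hBne ?_
        rintro b ⟨S, hS, rfl⟩
        exact hkey T hT S hS
      have hTpos : (0:ℝ) < ‖T‖ := lt_of_lt_of_le one_pos (hTnorm T hT)
      calc m⁻¹ ≤ (‖T‖⁻¹)⁻¹ := by
            apply inv_anti₀ (inv_pos.mpr hTpos) h1
        _ = ‖T‖ := inv_inv _
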